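/- Let k be a field of characteristic 0 (or any field) and α = (m,p,1) with integers m > p > 1. Let M_α be the group of triangular automorphisms of k³ of the form g = (x₁+P(x₂,x₃), x₂+Q(x₃), x₃+d) with −ν(P) ≤ m and deg Q ≤ p (where −ν assigns x₂ weight p and x₃ weight 1), and let N_α ⊂ M_α be the subset with strict inequalities −ν(P) < m and deg Q < p. Then N_α is a normal subgroup of M_α. -/

import Mathlib

open MvPolynomial

/-- Membership in `M_α` for `α = (m,p,1)`: algebra automorphisms of
`k[x₁,x₂,x₃]` of the form `(x₁+P(x₂,x₃), x₂+Q(x₃), x₃+d)` with every monomial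
of `P` of weighted degree (`x₂` of weight `p`, `x₃` of weight `1`) at most `m`
and `deg Q ≤ p`. -/
def InMα (k : Type*) [Field k] (m p : ℕ)
    (f : MvPolynomial (Fin 3) k ≃ₐ[k] MvPolynomial (Fin 3) k) : Prop :=
  ∃ (P Q : MvPolynomial (Fin 3) k) (d : k),
    (∀ e ∈ P.support, e 0 = 0 ∧ p * e 1 + e 2 ≤ m) ∧
    (∀ e ∈ Q.support, e 0 = 0 ∧ e 1 = 0 ∧ e 2 ≤ p) ∧
    f (X 0) = X 0 + P ∧ f (X 1) = X 1 + Q ∧ f (X 2) = X 2 + C d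

/-- Membership in `N_α`: same shape with the strict inequalities
`−ν(P) < m` and `deg Q < p`. -/
def InNα (k : Type*) [Field k] (m p : ℕ)
    (f : MvPolynomial (Fin 3) k ≃ₐ[k] MvPolynomial (Fin 3) k) : Prop :=
  ∃ (P Q : MvPolynomial (Fin 3) k) (d : k),
    (∀ e ∈ P.support, e 0 = 0 ∧ p * e 1 + e 2 < m) ∧
    (∀ e ∈ Q.support, e 0 = 0 ∧ e 1 = 0 ∧ e 2 < p) ∧
    f (X 0) = X 0 + P ∧ f (X 1) = X 1 + Q ∧ f (X 2) = X 2 + C d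

section Helpers
variable {k : Type*} [Field k]

/-- Auxiliary: every exponent of `P` has `e 0 = 0` and weighted degree
(`x₂` weight `q`, `x₃` weight `1`) at most `a`. -/
def Wb (q a : ℕ) (P : MvPolynomial (Fin 3) k) : Prop :=
  ∀ e ∈ P.support, e 0 = 0 ∧ q * e 1 + e 2 ≤ a

theorem Wb_mono {q a b : ℕ} {P : MvPolynomial (Fin 3) k} (h : Wb q a P) (hab : a ≤ b) :
    Wb q b P := fun e he => ⟨(h e he).1, le_trans (h e he).2 hab⟩

theorem Wb_of_lt_q {q a : ℕ} {P : MvPolynomial (Fin 3) k} (h : Wb q a P) (ha : a < q)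
    (q' : ℕ) : Wb q' a P := by
  intro e he
  obtain ⟨h0, h2⟩ := h e he
  have h1 : e 1 = 0 := by
    by_contra hne
    have : q ≤ q * e 1 := Nat.le_mul_of_pos_right q (Nat.pos_of_ne_zero hne)
    omega
  rw [h1] at h2
  exact ⟨h0, by rw [h1]; simpa using h2⟩

theorem Wb_zero {q a : ℕ} : Wb q a (0 : MvPolynomial (Fin 3) k) := by
  intro e he; simp at he

theorem Wb_C {q a : ℕ} (c : k) : Wb q a (C c : MvPolynomial (Fin 3) k) := by
  intro e he
  rw [mem_support_iff, coeff_C] at he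
  have : e = 0 := by by_contra h; rw [if_neg (by exact fun h' => h h'.symm)] at he; exact he rfl
  subst this; simp

theorem Wb_add {q a : ℕ} {P Q : MvPolynomial (Fin 3) k} (hP : Wb q a P) (hQ : Wb q a Q) :
    Wb q a (P + Q) := by
  intro e he
  rcases Finset.mem_union.1 (support_add he) with h | h
  · exact hP e h
  · exact hQ e h

theorem Wb_neg {q a : ℕ} {P : MvPolynomial (Fin 3) k} (hP : Wb q a P) : Wb q a (-P) := by
  intro e he; rw [support_neg] at he; exact hP e he

theorem Wb_sub {q a : ℕ} {P Q : MvPolynomial (Fin 3) k} (hP : Wb q a P) (hQ : Wb q a Q) :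
    Wb q a (P - Q) := by
  rw [sub_eq_add_neg]; exact Wb_add hP (Wb_neg hQ)

theorem Wb_mul {q a b : ℕ} {P Q : MvPolynomial (Fin 3) k} (hP : Wb q a P) (hQ : Wb q b Q) :
    Wb q (a + b) (P * Q) := by
  classical
  intro e he
  have := support_mul P Q he
  rw [Finset.mem_add] at this
  obtain ⟨u, hu, v, hv, huv⟩ := this
  obtain ⟨hu0, hu2⟩ := hP u hu
  obtain ⟨hv0, hv2⟩ := hQ v hv
  subst huv
  constructor
  · simp [hu0, hv0]
  · have : q * (u 1 + v 1) = q * u 1 + q * v 1 := by ring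
    simp only [Finsupp.add_apply]
    omega

theorem Wb_pow {q a : ℕ} {P : MvPolynomial (Fin 3) k} (hP : Wb q a P) (n : ℕ) :
    Wb q (a * n) (P ^ n) := by
  induction n with
  | zero => rw [pow_zero, ← C_1]; exact Wb_C 1
  | succ n ih =>
      rw [pow_succ]
      have := Wb_mul ih hP
      exact Wb_mono this (by ring_nf; omega)

theorem Wb_sum {q a : ℕ} {α : Type*} {s : Finset α} {f : α → MvPolynomial (Fin 3) k}
    (h : ∀ i ∈ s, Wb q a (f i)) : Wb q a (∑ i ∈ s, f i) := by
  classical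
  induction s using Finset.induction_on with
  | empty => simpa using (Wb_zero : Wb q a (0 : MvPolynomial (Fin 3) k))
  | insert _ _ hni ih =>
      rw [Finset.sum_insert hni]
      exact Wb_add (h _ (Finset.mem_insert_self _ _))
        (ih fun i hi => h i (Finset.mem_insert_of_mem hi))

theorem Wb_X1 {q : ℕ} : Wb q q (X 1 : MvPolynomial (Fin 3) k) := by
  intro e he
  rw [support_X, Finset.mem_singleton] at he
  subst he
  simp [Finsupp.single_apply]

theorem Wb_X2 {q : ℕ} : Wb q 1 (X 2 : MvPolynomial (Fin 3) k) := by
  intro e he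
  rw [support_X, Finset.mem_singleton] at he
  subst he
  simp [Finsupp.single_apply]

theorem aeval_monomial_expand (e : Fin 3 →₀ ℕ) (he : e 0 = 0) (c : k)
    (s : Fin 3 → MvPolynomial (Fin 3) k) :
    aeval s (monomial e c) = C c * (s 1 ^ e 1 * s 2 ^ e 2) := by
  rw [aeval_monomial, Finsupp.prod_fintype _ _ (fun i => pow_zero _), Fin.prod_univ_three,
    he, pow_zero, one_mul, algebraMap_eq]

theorem aeval_as_sum (s : Fin 3 → MvPolynomial (Fin 3) k) (P : MvPolynomial (Fin 3) k) :
    aeval s P = ∑ e ∈ P.support, aeval s (monomial e (coeff e P)) := by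
  conv_lhs => rw [as_sum P]
  rw [map_sum]

theorem Wb_aeval {q a : ℕ} {P : MvPolynomial (Fin 3) k} {s : Fin 3 → MvPolynomial (Fin 3) k}
    (hP : Wb q a P) (h1 : Wb q q (s 1)) (h2 : Wb q 1 (s 2)) : Wb q a (aeval s P) := by
  rw [aeval_as_sum]
  apply Wb_sum
  intro e he
  rw [aeval_monomial_expand e (hP e he).1]
  have := Wb_mul (Wb_C (q := q) (a := 0) (coeff e P)) (Wb_mul (Wb_pow h1 (e 1)) (Wb_pow h2 (e 2)))
  apply Wb_mono this
  have := (hP e he).2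
  have hc : q * e 1 = e 1 * q := by ring
  omega

theorem aeval_congr1 {P : MvPolynomial (Fin 3) k} {s t : Fin 3 → MvPolynomial (Fin 3) k}
    (hP : ∀ e ∈ P.support, e 0 = 0) (h1 : s 1 = t 1) (h2 : s 2 = t 2) :
    aeval s P = aeval t P := by
  rw [aeval_as_sum, aeval_as_sum]
  apply Finset.sum_congr rfl
  intro e he
  rw [aeval_monomial_expand e (hP e he), aeval_monomial_expand e (hP e he), h1, h2]

theorem aeval_congr2 {P : MvPolynomial (Fin 3) k} {s t : Fin 3 → MvPolynomial (Fin 3) k}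
    (hP : ∀ e ∈ P.support, e 0 = 0 ∧ e 1 = 0) (h2 : s 2 = t 2) :
    aeval s P = aeval t P := by
  rw [aeval_as_sum, aeval_as_sum]
  apply Finset.sum_congr rfl
  intro e he
  rw [aeval_monomial_expand e (hP e he).1, aeval_monomial_expand e (hP e he).1,
    (hP e he).2, h2]
  simp

theorem algEquiv_apply_eq_aeval (f : MvPolynomial (Fin 3) k ≃ₐ[k] MvPolynomial (Fin 3) k)
    (P : MvPolynomial (Fin 3) k) : f P = aeval (fun i => f (X i)) P := by
  have h := aeval_unique (f : MvPolynomial (Fin 3) k →ₐ[k] MvPolynomial (Fin 3) k)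
  have h2 := congrArg (fun φ : MvPolynomial (Fin 3) k →ₐ[k] MvPolynomial (Fin 3) k => φ P) h
  simpa [Function.comp_def] using h2

/-- Key cancellation: substituting `x₁ ↦ x₁ + S`, `x₂ ↦ x₂ + t` into a monomial
and subtracting the monomial drops the weighted degree by one. -/
theorem Wb_diff_monomial {q qs : ℕ} {S : MvPolynomial (Fin 3) k} {t : k}
    (hqs : qs + 1 ≤ q) (hS : Wb q qs S) :
    ∀ (i j c : ℕ), q * i + j ≤ c + 1 →
      Wb q c ((X 1 + S) ^ i * (X 2 + C t) ^ j - X 1 ^ i * X 2 ^ j) := by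
  intro i
  induction i with
  | zero =>
      intro j
      induction j with
      | zero => intro c _; simpa using (Wb_zero : Wb q c (0 : MvPolynomial (Fin 3) k))
      | succ j ihj =>
          intro c hc
          have key : (X 1 + S : MvPolynomial (Fin 3) k) ^ 0 * (X 2 + C t) ^ (j + 1)
              - X 1 ^ 0 * X 2 ^ (j + 1)
              = ((X 1 + S) ^ 0 * (X 2 + C t) ^ j - X 1 ^ 0 * X 2 ^ j) * (X 2 + C t)
                + X 2 ^ j * C t := by ring
          rw [key]
          rcases c with _ | c
          · have hj : j = 0 := by omega
            subst hj
            simp only [pow_zero, one_mul, sub_self, zero_mul, zero_add]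
            exact Wb_C t
          · apply Wb_add
            · have h1 := ihj c (by omega)
              have h2 : Wb q 1 ((X 2 : MvPolynomial (Fin 3) k) + C t) := Wb_add Wb_X2 (Wb_C t)
              exact Wb_mono (Wb_mul h1 h2) (by omega)
            · exact Wb_mono (Wb_mul (Wb_pow (Wb_X2 (q := q)) j) (Wb_C (a := 0) t)) (by omega)
  | succ i ihi =>
      intro j c hc
      have key : (X 1 + S : MvPolynomial (Fin 3) k) ^ (i + 1) * (X 2 + C t) ^ j
          - X 1 ^ (i + 1) * X 2 ^ j
          = (X 1 + S) * ((X 1 + S) ^ i * (X 2 + C t) ^ j - X 1 ^ i * X 2 ^ j)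
            + S * (X 1 ^ i * X 2 ^ j) := by ring
      rw [key]
      have hX1S : Wb q q ((X 1 : MvPolynomial (Fin 3) k) + S) :=
        Wb_add Wb_X1 (Wb_mono hS (by omega))
      have hqi : q * (i + 1) = q * i + q := by ring
      by_cases hcq : q ≤ c
      · apply Wb_add
        · have h1 := ihi j (c - q) (by omega)
          exact Wb_mono (Wb_mul hX1S h1) (by omega)
        · have h2 := Wb_mul hS (Wb_mul (Wb_pow (Wb_X1 (q := q)) i) (Wb_pow (Wb_X2 (q := q)) j))
          apply Wb_mono h2
          have h3 : q * i = i * q := by ring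
          omega
      · -- then i = 0, j = 0, c = q - 1
        have hq1 : q * (i + 1) + j ≤ q := by omega
        have hle : q ≤ q * (i + 1) := Nat.le_mul_of_pos_right q (by omega)
        have hi0 : i = 0 := by
          by_contra h
          have : q * (i + 1) ≥ q * 2 := Nat.mul_le_mul_left q (by omega)
          omega
        have hj0 : j = 0 := by omega
        subst hi0; subst hj0
        have hsimp : (X 1 + S : MvPolynomial (Fin 3) k) * ((X 1 + S) ^ 0 * (X 2 + C t) ^ 0
            - X 1 ^ 0 * X 2 ^ 0) + S * (X 1 ^ 0 * X 2 ^ 0) = S := by ring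
        rw [hsimp]
        exact Wb_mono hS (by omega)

/-- Substitute-and-subtract on a polynomial: weighted degree drops strictly. -/
theorem Wb_aeval_sub {q qs a c : ℕ} {P S : MvPolynomial (Fin 3) k} {t : k}
    {s : Fin 3 → MvPolynomial (Fin 3) k}
    (hP : Wb q a P) (hS : Wb q qs S) (hqs : qs + 1 ≤ q)
    (h1 : s 1 = X 1 + S) (h2 : s 2 = X 2 + C t) (hac : a ≤ c + 1) :
    Wb q c (aeval s P - P) := by
  have key : aeval s P - P = ∑ e ∈ P.support,
      (aeval s (monomial e (coeff e P)) - aeval X (monomial e (coeff e P))) := by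
    rw [Finset.sum_sub_distrib, ← aeval_as_sum s P, ← aeval_as_sum X P, aeval_X_left_apply]
  rw [key]
  apply Wb_sum
  intro e he
  rw [aeval_monomial_expand e (hP e he).1, aeval_monomial_expand e (hP e he).1, h1, h2,
    ← mul_sub]
  have hm := Wb_diff_monomial (t := t) hqs hS (e 1) (e 2) c (le_trans (hP e he).2 hac)
  exact Wb_mono (Wb_mul (Wb_C (a := 0) (coeff e P)) hm) (by omega)

theorem algEquiv_C (f : MvPolynomial (Fin 3) k ≃ₐ[k] MvPolynomial (Fin 3) k) (d : k) :
    f (C d) = C d := by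
  rw [← algebraMap_eq]; exact f.commutes d

theorem algEquiv_aeval_comm (f : MvPolynomial (Fin 3) k ≃ₐ[k] MvPolynomial (Fin 3) k)
    (s : Fin 3 → MvPolynomial (Fin 3) k) (R : MvPolynomial (Fin 3) k) :
    f (aeval s R) = aeval (fun i => f (s i)) R := by
  rw [algEquiv_apply_eq_aeval f (aeval s R), comp_aeval_apply]
  have : (fun i => aeval (fun j => f (X j)) (s i)) = fun i => f (s i) :=
    funext fun i => by rw [algEquiv_apply_eq_aeval f (s i)]
  rw [this]

theorem WbQ_iff {b : ℕ} {Q : MvPolynomial (Fin 3) k} :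
    Wb (b + 1) b Q ↔ ∀ e ∈ Q.support, e 0 = 0 ∧ e 1 = 0 ∧ e 2 ≤ b := by
  constructor
  · intro h e he
    obtain ⟨h0, h2⟩ := h e he
    have h1 : e 1 = 0 := by
      by_contra hne
      have : b + 1 ≤ (b + 1) * e 1 := Nat.le_mul_of_pos_right _ (Nat.pos_of_ne_zero hne)
      omega
    rw [h1] at h2
    exact ⟨h0, h1, by simpa using h2⟩
  · intro h e he
    obtain ⟨h0, h1, h2⟩ := h e he
    exact ⟨h0, by rw [h1]; simpa using h2⟩

/-- The common shape predicate: `f = (x₁+P, x₂+Q(x₃), x₃+d)` with `−ν(P) ≤ a`,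
`deg Q ≤ b`. -/
def Shape (q a b : ℕ) (f : MvPolynomial (Fin 3) k ≃ₐ[k] MvPolynomial (Fin 3) k) : Prop :=
  ∃ (P Q : MvPolynomial (Fin 3) k) (d : k),
    Wb q a P ∧ Wb (b + 1) b Q ∧
    f (X 0) = X 0 + P ∧ f (X 1) = X 1 + Q ∧ f (X 2) = X 2 + C d

theorem shape_one {q a b : ℕ} :
    Shape q a b (1 : MvPolynomial (Fin 3) k ≃ₐ[k] MvPolynomial (Fin 3) k) :=
  ⟨0, 0, 0, Wb_zero, Wb_zero, by simp, by simp, by simp⟩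

theorem shape_mono {q a b a' b' : ℕ} {f : MvPolynomial (Fin 3) k ≃ₐ[k] MvPolynomial (Fin 3) k}
    (h : Shape q a b f) (ha : a ≤ a') (hb : b ≤ b') : Shape q a' b' f := by
  obtain ⟨P, Q, d, hP, hQ, h0, h1, h2⟩ := h
  exact ⟨P, Q, d, Wb_mono hP ha,
    Wb_mono (Wb_of_lt_q hQ (by omega) (b' + 1)) hb, h0, h1, h2⟩

theorem shape_mul {q a b : ℕ} {f g : MvPolynomial (Fin 3) k ≃ₐ[k] MvPolynomial (Fin 3) k}
    (hbq : b ≤ q) (hf : Shape q a b f) (hg : Shape q a b g) : Shape q a b (f * g) := by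
  obtain ⟨Pf, Qf, df, hPf, hQf, hf1, hf2, hf3⟩ := hf
  obtain ⟨Pg, Qg, dg, hPg, hQg, hg1, hg2, hg3⟩ := hg
  have hWs1 : Wb q q (f (X 1)) := by
    rw [hf2]; exact Wb_add Wb_X1 (Wb_mono (Wb_of_lt_q hQf (by omega) q) hbq)
  have hWs2 : Wb q 1 (f (X 2)) := by rw [hf3]; exact Wb_add Wb_X2 (Wb_C df)
  have hWs1' : Wb (b + 1) (b + 1) (f (X 1)) := by
    rw [hf2]; exact Wb_add Wb_X1 (Wb_mono hQf (by omega))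
  have hWs2' : Wb (b + 1) 1 (f (X 2)) := by rw [hf3]; exact Wb_add Wb_X2 (Wb_C df)
  refine ⟨Pf + aeval (fun i => f (X i)) Pg, Qf + aeval (fun i => f (X i)) Qg, df + dg,
    ?_, ?_, ?_, ?_, ?_⟩
  · exact Wb_add hPf (Wb_aeval hPg hWs1 hWs2)
  · exact Wb_add hQf (Wb_aeval hQg hWs1' hWs2')
  · rw [AlgEquiv.mul_apply, hg1, map_add, hf1, algEquiv_apply_eq_aeval f Pg]; ring
  · rw [AlgEquiv.mul_apply, hg2, map_add, hf2, algEquiv_apply_eq_aeval f Qg]; ring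
  · rw [AlgEquiv.mul_apply, hg3, map_add, hf3, algEquiv_C, map_add]; ring

theorem shape_inv {q a b : ℕ} {f : MvPolynomial (Fin 3) k ≃ₐ[k] MvPolynomial (Fin 3) k}
    (hbq : b ≤ q) (hf : Shape q a b f) : Shape q a b f⁻¹ := by
  obtain ⟨P, Q, d, hP, hQ, hf1, hf2, hf3⟩ := hf
  set s0 : Fin 3 → MvPolynomial (Fin 3) k := ![X 0, X 1, X 2 - C d] with hs0
  have hs01 : s0 1 = X 1 := rfl
  have hs02 : s0 2 = X 2 - C d := rfl
  set Q' : MvPolynomial (Fin 3) k := -(aeval s0 Q) with hQ'def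
  set s1 : Fin 3 → MvPolynomial (Fin 3) k := ![X 0, X 1 + Q', X 2 - C d] with hs1d
  have hs11 : s1 1 = X 1 + Q' := rfl
  have hs12 : s1 2 = X 2 - C d := rfl
  set P' : MvPolynomial (Fin 3) k := -(aeval s1 P) with hP'def
  have hQ'b : Wb (b + 1) b Q' :=
    Wb_neg (Wb_aeval hQ (by rw [hs01]; exact Wb_X1)
      (by rw [hs02]; exact Wb_sub Wb_X2 (Wb_C d)))
  have hP'b : Wb q a P' :=
    Wb_neg (Wb_aeval hP
      (by rw [hs11]; exact Wb_add Wb_X1 (Wb_mono (Wb_of_lt_q hQ'b (by omega) q) hbq))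
      (by rw [hs12]; exact Wb_sub Wb_X2 (Wb_C d)))
  have hfu2 : f (X 2 - C d) = X 2 := by rw [map_sub, hf3, algEquiv_C]; ring
  have hfQ'' : f (aeval s0 Q) = Q := by
    rw [algEquiv_aeval_comm]
    refine (aeval_congr2 (t := X)
      (fun e he => ⟨(WbQ_iff.mp hQ e he).1, (WbQ_iff.mp hQ e he).2.1⟩) ?_).trans
      (aeval_X_left_apply Q)
    show f (s0 2) = X 2
    rw [hs02]; exact hfu2
  have hfx1' : f (X 1 + Q') = X 1 := by
    rw [map_add, hf2, hQ'def, map_neg, hfQ'']; ring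
  have hfP'' : f (aeval s1 P) = P := by
    rw [algEquiv_aeval_comm]
    refine (aeval_congr1 (t := X) (fun e he => (hP e he).1) ?_ ?_).trans (aeval_X_left_apply P)
    · show f (s1 1) = X 1
      rw [hs11]; exact hfx1'
    · show f (s1 2) = X 2
      rw [hs12]; exact hfu2
  have hfx0' : f (X 0 + P') = X 0 := by
    rw [map_add, hf1, hP'def, map_neg, hfP'']; ring
  refine ⟨P', Q', -d, hP'b, hQ'b, ?_, ?_, ?_⟩
  · have h : f⁻¹ (X 0) = f.symm (X 0) := rfl
    rw [h]
    conv_lhs => rw [← hfx0']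
    rw [f.symm_apply_apply]
  · have h : f⁻¹ (X 1) = f.symm (X 1) := rfl
    rw [h]
    conv_lhs => rw [← hfx1']
    rw [f.symm_apply_apply]
  · have h : f⁻¹ (X 2) = f.symm (X 2) := rfl
    rw [h]
    conv_lhs => rw [← hfu2]
    rw [f.symm_apply_apply, map_neg]
    ring

theorem shape_conj {q a b a' b' : ℕ} {f g : MvPolynomial (Fin 3) k ≃ₐ[k] MvPolynomial (Fin 3) k}
    (hbq : b ≤ q) (hb'q : b' + 1 ≤ q) (haa : a ≤ a' + 1) (hbb : b ≤ b' + 1)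
    (hf : Shape q a b f) (hg : Shape q a' b' g) : Shape q a' b' (f * g * f⁻¹) := by
  obtain ⟨P₁, Q₁, d₁, hP₁, hQ₁, hi0, hi1, hi2⟩ := shape_inv hbq hf
  obtain ⟨Pf, Qf, df, hPf, hQf, hf0, hf1, hf2⟩ := hf
  obtain ⟨Pg, Qg, dg, hPg, hQg, hg0, hg1, hg2⟩ := hg
  have hfP₁ : f P₁ = -Pf := by
    have h := f.apply_symm_apply (X 0)
    have h2 : f.symm (X 0) = X 0 + P₁ := hi0
    rw [h2, map_add, hf0] at h
    linear_combination h
  have hfQ₁ : f Q₁ = -Qf := by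
    have h := f.apply_symm_apply (X 1)
    have h2 : f.symm (X 1) = X 1 + Q₁ := hi1
    rw [h2, map_add, hf1] at h
    linear_combination h
  have hWf1 : Wb q q (f (X 1)) := by
    rw [hf1]; exact Wb_add Wb_X1 (Wb_mono (Wb_of_lt_q hQf (by omega) q) hbq)
  have hWf2 : Wb q 1 (f (X 2)) := by rw [hf2]; exact Wb_add Wb_X2 (Wb_C df)
  have hWf1' : Wb (b' + 1) (b' + 1) (f (X 1)) := by
    rw [hf1]; exact Wb_add Wb_X1 (Wb_mono (Wb_of_lt_q hQf (by omega) (b' + 1)) hbb)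
  have hWf2' : Wb (b' + 1) 1 (f (X 2)) := by rw [hf2]; exact Wb_add Wb_X2 (Wb_C df)
  have hgP₁ : Wb q a' (g P₁ - P₁) := by
    rw [algEquiv_apply_eq_aeval g P₁]
    exact Wb_aeval_sub hP₁ (Wb_of_lt_q hQg (by omega) q) hb'q hg1 hg2 haa
  have hgQ₁ : Wb (b' + 1) b' (g Q₁ - Q₁) := by
    rw [algEquiv_apply_eq_aeval g Q₁]
    exact Wb_aeval_sub (Wb_of_lt_q hQ₁ (by omega) (b' + 1)) hQg (by omega) hg1 hg2 hbb
  refine ⟨f Pg + f (g P₁ - P₁), f Qg + f (g Q₁ - Q₁), df + dg + d₁, ?_, ?_, ?_, ?_, ?_⟩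
  · apply Wb_add
    · rw [algEquiv_apply_eq_aeval f Pg]; exact Wb_aeval hPg hWf1 hWf2
    · rw [algEquiv_apply_eq_aeval f _]; exact Wb_aeval hgP₁ hWf1 hWf2
  · apply Wb_add
    · rw [algEquiv_apply_eq_aeval f Qg]; exact Wb_aeval hQg hWf1' hWf2'
    · rw [algEquiv_apply_eq_aeval f _]; exact Wb_aeval hgQ₁ hWf1' hWf2'
  · rw [AlgEquiv.mul_apply, AlgEquiv.mul_apply, hi0, map_add, hg0, map_add, map_add, hf0,
      map_sub]
    linear_combination hfP₁
  · rw [AlgEquiv.mul_apply, AlgEquiv.mul_apply, hi1, map_add, hg1, map_add, map_add, hf1,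
      map_sub]
    linear_combination hfQ₁
  · rw [AlgEquiv.mul_apply, AlgEquiv.mul_apply, hi2, map_add, hg2, map_add, map_add, hf2]
    simp only [algEquiv_C, map_add]
    ring

theorem inM_iff {m p : ℕ} {f : MvPolynomial (Fin 3) k ≃ₐ[k] MvPolynomial (Fin 3) k} :
    InMα k m p f ↔ Shape p m p f := by
  constructor
  · rintro ⟨P, Q, d, hP, hQ, h0, h1, h2⟩
    exact ⟨P, Q, d, hP, WbQ_iff.mpr hQ, h0, h1, h2⟩
  · rintro ⟨P, Q, d, hP, hQ, h0, h1, h2⟩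
    exact ⟨P, Q, d, hP, WbQ_iff.mp hQ, h0, h1, h2⟩

theorem inN_iff {m p : ℕ} (hpm : p < m) (hp : 1 < p)
    {f : MvPolynomial (Fin 3) k ≃ₐ[k] MvPolynomial (Fin 3) k} :
    InNα k m p f ↔ Shape p (m - 1) (p - 1) f := by
  constructor
  · rintro ⟨P, Q, d, hP, hQ, h0, h1, h2⟩
    refine ⟨P, Q, d, ?_, ?_, h0, h1, h2⟩
    · intro e he; obtain ⟨x, y⟩ := hP e he; exact ⟨x, by omega⟩
    · apply WbQ_iff.mpr; intro e he; obtain ⟨x, y, z⟩ := hQ e he; exact ⟨x, y, by omega⟩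
  · rintro ⟨P, Q, d, hP, hQ, h0, h1, h2⟩
    refine ⟨P, Q, d, ?_, ?_, h0, h1, h2⟩
    · intro e he; obtain ⟨x, y⟩ := hP e he; exact ⟨x, by omega⟩
    · intro e he; obtain ⟨x, y, z⟩ := WbQ_iff.mp hQ e he; exact ⟨x, y, by omega⟩

theorem Nα_normal_in_Mα' (m p : ℕ) (hpm : p < m) (hp : 1 < p) :
    (InMα k m p 1) ∧
    (∀ f g, InMα k m p f → InMα k m p g → InMα k m p (f * g)) ∧
    (∀ f, InMα k m p f → InMα k m p f⁻¹) ∧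
    (InNα k m p 1) ∧
    (∀ f g, InNα k m p f → InNα k m p g → InNα k m p (f * g)) ∧
    (∀ f, InNα k m p f → InNα k m p f⁻¹) ∧
    (∀ f, InNα k m p f → InMα k m p f) ∧
    (∀ f g, InMα k m p f → InNα k m p g → InNα k m p (f * g * f⁻¹)) := by
  refine ⟨?_, ?_, ?_, ?_, ?_, ?_, ?_, ?_⟩
  · exact inM_iff.mpr shape_one
  · intro f g hf hg
    exact inM_iff.mpr (shape_mul le_rfl (inM_iff.mp hf) (inM_iff.mp hg))
  · intro f hf
    exact inM_iff.mpr (shape_inv le_rfl (inM_iff.mp hf))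
  · exact (inN_iff hpm hp).mpr shape_one
  · intro f g hf hg
    exact (inN_iff hpm hp).mpr
      (shape_mul (by omega) ((inN_iff hpm hp).mp hf) ((inN_iff hpm hp).mp hg))
  · intro f hf
    exact (inN_iff hpm hp).mpr (shape_inv (by omega) ((inN_iff hpm hp).mp hf))
  · intro f hf
    exact inM_iff.mpr (shape_mono ((inN_iff hpm hp).mp hf) (by omega) (by omega))
  · intro f g hf hg
    exact (inN_iff hpm hp).mpr
      (shape_conj le_rfl (by omega) (by omega) (by omega) (inM_iff.mp hf)
        ((inN_iff hpm hp).mp hg))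

end Helpers

/-- for `m > p > 1`, `M_α` and `N_α` are subgroups of the group
of algebra automorphisms of `k[x₁,x₂,x₃]`, `N_α ⊆ M_α`, and `N_α` is a normal
subgroup of `M_α`. -/
theorem Nα_normal_in_Mα (k : Type*) [Field k] (m p : ℕ) (hpm : p < m) (hp : 1 < p) :
    (InMα k m p 1) ∧
    (∀ f g, InMα k m p f → InMα k m p g → InMα k m p (f * g)) ∧
    (∀ f, InMα k m p f → InMα k m p f⁻¹) ∧
    (InNα k m p 1) ∧
    (∀ f g, InNα k m p f → InNα k m p g → InNα k m p (f * g)) ∧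
    (∀ f, InNα k m p f → InNα k m p f⁻¹) ∧
    (∀ f, InNα k m p f → InMα k m p f) ∧
    (∀ f g, InMα k m p f → InNα k m p g → InNα k m p (f * g * f⁻¹)) := by
  exact Nα_normal_in_Mα' m p hpm hp
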